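/- Let θ > −1, κ > 0, and let u₀, u₁ ∈ ℝ. Suppose η : [0,∞) → ℝ is continuous and satisfies the Volterra integral equation η(t) = (u₀ + u₁ t)² + κ ∫_0^t (t−s)^θ η(s) ds for all t ≥ 0. Then for all t ≥ 0, writing x = κ Γ(θ+1) t^{θ+1}, one has η(t) = u₀² E_{θ+1}(x) + 2 u₀ u₁ t · E_{θ+1,2}(x) + 2 u₁² t² · E_{θ+1,3}(x). -/

import Mathlib

/-- The two-parameter Mittag-Leffler function `E_{a,b}(z) = ∑_{k=0}^∞ z^k / Γ(a k + b)`. -/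
noncomputable def mittagLeffler (a b z : ℝ) : ℝ :=
  ∑' k : ℕ, z ^ k / Real.Gamma (a * k + b)

open Real MeasureTheory intervalIntegral Set Filter

lemma ker_int {θ : ℝ} (hθ : -1 < θ) (t : ℝ) :
    IntervalIntegrable (fun s => (t - s) ^ θ) volume 0 t := by
  have := ((intervalIntegrable_rpow' (a := 0) (b := t) hθ).comp_sub_left t).symm
  simpa using this

lemma kerMul_int {θ t : ℝ} (hθ : -1 < θ) (ht : 0 ≤ t) {f : ℝ → ℝ}
    (hf : ContinuousOn f (Icc 0 t)) :
    IntervalIntegrable (fun s => (t - s) ^ θ * f s) volume 0 t := by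
  refine (ker_int hθ t).mul_continuousOn ?_
  rwa [uIcc_of_le ht]

lemma conv_rpow {θ p : ℝ} (hθ : -1 < θ) (hp : 0 ≤ p) {t : ℝ} (ht : 0 ≤ t) :
    ∫ s in (0:ℝ)..t, (t - s) ^ θ * s ^ p
      = Real.Gamma (θ + 1) * Real.Gamma (p + 1) / Real.Gamma (θ + p + 2) * t ^ (θ + p + 1) := by
  rcases eq_or_lt_of_le ht with h0 | ht0
  · rw [← h0, integral_same, Real.zero_rpow (by linarith), mul_zero]
  -- complexify
  have hre : ∀ s ∈ uIcc (0:ℝ) t,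
      ((((t - s) ^ θ * s ^ p : ℝ)) : ℂ) = (s:ℂ) ^ ((p+1:ℂ) - 1) * ((t:ℂ) - s) ^ ((θ+1:ℂ) - 1) := by
    intro s hs
    rw [uIcc_of_le ht] at hs
    have h1 : (0:ℝ) ≤ t - s := by linarith [hs.2]
    have h2 : (0:ℝ) ≤ s := hs.1
    have e1 : ((p+1:ℂ) - 1) = ((p:ℝ):ℂ) := by push_cast; ring
    have e2 : ((θ+1:ℂ) - 1) = ((θ:ℝ):ℂ) := by push_cast; ring
    have e3 : ((t:ℂ) - (s:ℂ)) = (((t - s : ℝ)):ℂ) := by push_cast; ring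
    rw [e1, e2, e3, ← Complex.ofReal_cpow h2, ← Complex.ofReal_cpow h1]
    push_cast
    ring
  have key := Complex.betaIntegral_scaled (p+1 : ℂ) (θ+1 : ℂ) ht0
  have hint : ((∫ s in (0:ℝ)..t, (t - s) ^ θ * s ^ p : ℝ) : ℂ)
      = ((t:ℂ)) ^ ((p+1:ℂ) + (θ+1) - 1) * Complex.betaIntegral (p+1) (θ+1) := by
    rw [← key, ← intervalIntegral.integral_ofReal]
    exact intervalIntegral.integral_congr hre
  have hb : Complex.betaIntegral (p+1) (θ+1)
      = Complex.Gamma (p+1) * Complex.Gamma (θ+1) / Complex.Gamma ((p+1)+(θ+1)) := by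
    have h1 : (0:ℝ) < Complex.re (p+1 : ℂ) := by simp; linarith
    have h2 : (0:ℝ) < Complex.re (θ+1 : ℂ) := by simp; linarith
    have := Complex.Gamma_mul_Gamma_eq_betaIntegral h1 h2
    have hne : Complex.Gamma ((p+1)+(θ+1)) ≠ 0 := by
      have : ((p+1)+(θ+1) : ℂ) = ((p + θ + 2 : ℝ) : ℂ) := by push_cast; ring
      rw [this, Complex.Gamma_ofReal]
      exact_mod_cast (Real.Gamma_pos_of_pos (by linarith)).ne'
    field_simp at this ⊢
    rw [this]
  rw [hb] at hint
  have hcast : ((t:ℂ)) ^ ((p+1:ℂ) + (θ+1) - 1) * (Complex.Gamma (p+1) * Complex.Gamma (θ+1) / Complex.Gamma ((p+1)+(θ+1)))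
      = ((Real.Gamma (θ + 1) * Real.Gamma (p + 1) / Real.Gamma (θ + p + 2) * t ^ (θ + p + 1) : ℝ) : ℂ) := by
    have e1 : ((p+1:ℂ) + (θ+1) - 1) = ((θ + p + 1 : ℝ) : ℂ) := by push_cast; ring
    have e2 : ((p+1:ℂ)+(θ+1)) = ((θ + p + 2 : ℝ) : ℂ) := by push_cast; ring
    have e3 : ((p:ℂ)+1) = ((p + 1 : ℝ) : ℂ) := by push_cast; ring
    have e4 : ((θ:ℂ)+1) = ((θ + 1 : ℝ) : ℂ) := by push_cast; ring
    rw [e1, e2, e3, e4, Complex.Gamma_ofReal, Complex.Gamma_ofReal, Complex.Gamma_ofReal,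
      ← Complex.ofReal_cpow ht]
    push_cast
    ring
  rw [hcast] at hint
  exact_mod_cast hint

lemma sum_div_nat_le {h : ℕ → ℝ} (hh : ∀ q, 0 ≤ h q) (N m : ℕ) (hN : 0 < N) :
    ∑ k ∈ Finset.range (N * m), h (k / N) = N * ∑ q ∈ Finset.range m, h q := by
  induction m with
  | zero => simp
  | succ m ih =>
    rw [Nat.mul_succ, Finset.sum_range_add, ih, Finset.sum_range_succ]
    have : ∑ i ∈ Finset.range N, h ((N * m + i) / N) = N * h m := by
      rw [Finset.sum_congr rfl (fun i hi => ?_), Finset.sum_const, Finset.card_range,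
        nsmul_eq_mul]
      congr 1
      rw [Finset.mem_range] at hi
      rw [Nat.mul_add_div hN, Nat.div_eq_of_lt hi]
      omega
    rw [this]; ring

set_option maxHeartbeats 1000000 in
lemma ml_summable {a b : ℝ} (ha : 0 < a) (hb : 0 < b) (z : ℝ) :
    Summable (fun k : ℕ => z ^ k / Real.Gamma (a * k + b)) := by
  have hG : ∀ k : ℕ, 0 < Real.Gamma (a * k + b) := fun k =>
    Real.Gamma_pos_of_pos (by positivity)
  rw [← summable_abs_iff]
  have habs : ∀ k : ℕ, |z ^ k / Real.Gamma (a * k + b)| = |z| ^ k / Real.Gamma (a * k + b) := by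
    intro k
    rw [abs_div, abs_pow, abs_of_pos (hG k)]
  simp_rw [habs]
  set C := |z| with hC
  have hC0 : 0 ≤ C := abs_nonneg z
  obtain ⟨N, hNpos, haN⟩ : ∃ N : ℕ, 0 < N ∧ 2 ≤ a * N := by
    obtain ⟨N, hN⟩ := exists_nat_ge (2 / a)
    refine ⟨N + 1, Nat.succ_pos N, ?_⟩
    push_cast
    rw [div_le_iff₀ ha] at hN
    nlinarith
  set D := max C 1 with hD
  have hD1 : (1:ℝ) ≤ D := le_max_right _ _
  have hCD : C ≤ D := le_max_left _ _
  have hD0 : (0:ℝ) ≤ D := le_trans zero_le_one hD1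
  set h : ℕ → ℝ := fun q => D ^ N * (C ^ N) ^ q / q.factorial with hh
  have hhnn : ∀ q, 0 ≤ h q := fun q => by positivity
  have hg : Summable (fun k : ℕ => h (k / N)) := by
    apply summable_of_sum_range_le (c := N * (D ^ N * Real.exp (C ^ N)))
      (fun k => hhnn _)
    intro m
    calc ∑ k ∈ Finset.range m, h (k / N)
        ≤ ∑ k ∈ Finset.range (N * m), h (k / N) := by
          apply Finset.sum_le_sum_of_subset_of_nonneg
          · exact Finset.range_mono (Nat.le_mul_of_pos_left m hNpos)
          · exact fun i _ _ => hhnn _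
      _ = N * ∑ q ∈ Finset.range m, h q := sum_div_nat_le hhnn N m hNpos
      _ ≤ N * (D ^ N * Real.exp (C ^ N)) := by
          apply mul_le_mul_of_nonneg_left _ (Nat.cast_nonneg N)
          rw [hh]
          simp_rw [mul_div_assoc]
          rw [← Finset.mul_sum]
          apply mul_le_mul_of_nonneg_left _ (by positivity)
          exact Real.sum_le_exp_of_nonneg (by positivity) m
  rw [← summable_nat_add_iff (2 * N)]
  refine Summable.of_nonneg_of_le
    (fun k => div_nonneg (pow_nonneg hC0 _) (hG (k + 2 * N)).le)
    (fun k => ?_) ((summable_nat_add_iff (2 * N)).2 hg)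
  set j := k + 2 * N with hj
  set q := j / N with hq
  have hq2 : 2 ≤ q := by
    have h2N : 2 * N ≤ j := by omega
    calc 2 = (2 * N) / N := by rw [Nat.mul_comm, Nat.mul_div_cancel_left _ hNpos]
      _ ≤ q := Nat.div_le_div_right h2N
  have hNq : N * q ≤ j := by
    rw [hq, mul_comm]; exact Nat.div_mul_le_self j N
  -- Gamma lower bound
  have hΓ : (q.factorial : ℝ) ≤ Real.Gamma (a * j + b) := by
    have e1 : ((q:ℝ) + 1) = ((q + 1 : ℕ) : ℝ) := by push_cast; ring
    have h1 : (q.factorial : ℝ) ≤ ((q+1).factorial : ℝ) := by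
      exact_mod_cast Nat.factorial_le (Nat.le_succ q)
    have h2 : ((q+1).factorial : ℝ) = Real.Gamma ((q:ℝ) + 2) := by
      rw [show ((q:ℝ) + 2) = ((q + 1 : ℕ) : ℝ) + 1 by push_cast; ring,
        Real.Gamma_nat_eq_factorial]
    have h3 : Real.Gamma ((q:ℝ) + 2) ≤ Real.Gamma (a * j + b) := by
      have hle : (q:ℝ) + 2 ≤ a * j + b := by
        have : (2:ℝ) * q ≤ a * j := by
          calc (2:ℝ) * q ≤ (a * N) * q := by
                have : (0:ℝ) ≤ (q:ℝ) := Nat.cast_nonneg q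
                nlinarith
            _ = a * ((N * q : ℕ) : ℝ) := by push_cast; ring
            _ ≤ a * j := by
                have : ((N * q : ℕ):ℝ) ≤ (j:ℝ) := Nat.cast_le.2 hNq
                nlinarith
        have hq2' : (2:ℝ) ≤ (q:ℝ) := by exact_mod_cast hq2
        linarith
      have hq0 : (0:ℝ) ≤ (q:ℝ) := Nat.cast_nonneg q
      have hmem1 : (q:ℝ) + 2 ∈ Ici (2:ℝ) := by
        simp only [mem_Ici]; linarith
      have hmem2 : a * j + b ∈ Ici (2:ℝ) := by
        simp only [mem_Ici]; linarith
      exact Real.Gamma_strictMonoOn_Ici.monotoneOn hmem1 hmem2 hle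
    linarith
  -- numerator bound
  have hnum : C ^ j ≤ D ^ N * (C ^ N) ^ q := by
    obtain ⟨r, hrN, hr⟩ : ∃ r, r < N ∧ j = N * q + r :=
      ⟨j % N, Nat.mod_lt _ hNpos, by rw [hq]; exact (Nat.div_add_mod j N).symm⟩
    calc C ^ j = (C ^ N) ^ q * C ^ r := by rw [hr, pow_add, pow_mul]
      _ ≤ (C ^ N) ^ q * D ^ N := by
          apply mul_le_mul_of_nonneg_left _ (by positivity)
          calc C ^ r ≤ D ^ r := pow_le_pow_left₀ hC0 hCD _
            _ ≤ D ^ N := pow_le_pow_right₀ hD1 hrN.le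
      _ = D ^ N * (C ^ N) ^ q := by ring
  calc C ^ j / Real.Gamma (a * j + b) ≤ (D ^ N * (C ^ N) ^ q) / q.factorial := by
        apply div_le_div₀ (by positivity) hnum (by positivity) hΓ
    _ = h q := rfl

lemma contMono' {q : ℝ} (hq : 0 ≤ q) (s : Set ℝ) : ContinuousOn (fun x : ℝ => x ^ q) s :=
  fun x _ => (Real.continuousAt_rpow_const x q (Or.inr hq)).continuousWithinAt

lemma K_mono {θ q t : ℝ} (hθ : -1 < θ) (hq : 0 ≤ q) (ht : 0 ≤ t) :
    ∫ s in (0:ℝ)..t, (t - s) ^ θ * (s ^ q / Real.Gamma (q + 1))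
      = Real.Gamma (θ + 1) * (t ^ (θ + q + 1) / Real.Gamma (θ + q + 2)) := by
  have hΓq : Real.Gamma (q + 1) ≠ 0 := (Real.Gamma_pos_of_pos (by linarith)).ne'
  have hΓ2 : Real.Gamma (θ + q + 2) ≠ 0 := (Real.Gamma_pos_of_pos (by linarith)).ne'
  simp_rw [← mul_div_assoc]
  rw [intervalIntegral.integral_div, conv_rpow hθ hq ht]
  field_simp

lemma K_mono' {θ q t b B E : ℝ} (hθ : -1 < θ) (hq : 0 ≤ q) (ht : 0 ≤ t)
    (hb : b = q + 1) (hB : B = θ + q + 2) (hE : E = θ + q + 1) :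
    ∫ s in (0:ℝ)..t, (t - s) ^ θ * (s ^ q / Real.Gamma b)
      = Real.Gamma (θ + 1) * (t ^ E / Real.Gamma B) := by
  subst hb hB hE; exact K_mono hθ hq ht

/-- the candidate series terms -/
noncomputable def mlA (θ κ u₀ u₁ : ℝ) (k : ℕ) (t : ℝ) : ℝ :=
  (κ * Real.Gamma (θ + 1)) ^ k *
    (u₀ ^ 2 * (t ^ ((θ + 1) * k) / Real.Gamma ((θ + 1) * k + 1))
     + 2 * u₀ * u₁ * (t ^ ((θ + 1) * k + 1) / Real.Gamma ((θ + 1) * k + 2))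
     + 2 * u₁ ^ 2 * (t ^ ((θ + 1) * k + 2) / Real.Gamma ((θ + 1) * k + 3)))

noncomputable def iterK (θ κ : ℝ) (η : ℝ → ℝ) : ℕ → ℝ → ℝ
  | 0 => η
  | n + 1 => fun t => κ * ∫ s in (0:ℝ)..t, (t - s) ^ θ * iterK θ κ η n s

lemma mlA_cont {θ κ u₀ u₁ : ℝ} (hθ : -1 < θ) (k : ℕ) (s : Set ℝ) :
    ContinuousOn (mlA θ κ u₀ u₁ k) s := by
  have h0 : (0:ℝ) ≤ (θ + 1) * k := by
    have : (0:ℝ) ≤ (k:ℝ) := Nat.cast_nonneg k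
    nlinarith
  have h1 : (0:ℝ) ≤ (θ + 1) * k + 1 := by linarith
  have h2 : (0:ℝ) ≤ (θ + 1) * k + 2 := by linarith
  unfold mlA
  apply ContinuousOn.mul continuousOn_const
  exact ((continuousOn_const.mul ((contMono' h0 s).div_const _)).add
    (continuousOn_const.mul ((contMono' h1 s).div_const _))).add
    (continuousOn_const.mul ((contMono' h2 s).div_const _))

lemma mlA_step {θ κ u₀ u₁ : ℝ} (hθ : -1 < θ) (k : ℕ) {t : ℝ} (ht : 0 ≤ t) :
    κ * ∫ s in (0:ℝ)..t, (t - s) ^ θ * mlA θ κ u₀ u₁ k s = mlA θ κ u₀ u₁ (k + 1) t := by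
  have h0 : (0:ℝ) ≤ (θ + 1) * k := by
    have : (0:ℝ) ≤ (k:ℝ) := Nat.cast_nonneg k
    nlinarith
  set c := κ * Real.Gamma (θ + 1) with hc
  have hsplit : ∀ s : ℝ, (t - s) ^ θ * mlA θ κ u₀ u₁ k s
      = (c ^ k * u₀ ^ 2) * ((t - s) ^ θ * (s ^ ((θ+1)*k) / Real.Gamma ((θ+1)*k + 1)))
      + ((c ^ k * (2 * u₀ * u₁)) * ((t - s) ^ θ * (s ^ ((θ+1)*k+1) / Real.Gamma ((θ+1)*k + 2)))
      + (c ^ k * (2 * u₁ ^ 2)) * ((t - s) ^ θ * (s ^ ((θ+1)*k+2) / Real.Gamma ((θ+1)*k + 3)))) := by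
    intro s; unfold mlA; rw [← hc]; ring
  have i1 : IntervalIntegrable
      (fun s => (t - s) ^ θ * (s ^ ((θ+1)*k) / Real.Gamma ((θ+1)*k + 1))) volume 0 t :=
    kerMul_int hθ ht ((contMono' h0 _).div_const _)
  have i2 : IntervalIntegrable
      (fun s => (t - s) ^ θ * (s ^ ((θ+1)*k+1) / Real.Gamma ((θ+1)*k + 2))) volume 0 t :=
    kerMul_int hθ ht ((contMono' (by linarith) _).div_const _)
  have i3 : IntervalIntegrable
      (fun s => (t - s) ^ θ * (s ^ ((θ+1)*k+2) / Real.Gamma ((θ+1)*k + 3))) volume 0 t :=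
    kerMul_int hθ ht ((contMono' (by linarith) _).div_const _)
  rw [intervalIntegral.integral_congr (fun s _ => hsplit s)]
  rw [intervalIntegral.integral_add (i1.const_mul _) ((i2.const_mul _).add (i3.const_mul _)),
    intervalIntegral.integral_add (i2.const_mul _) (i3.const_mul _),
    intervalIntegral.integral_const_mul, intervalIntegral.integral_const_mul,
    intervalIntegral.integral_const_mul]
  rw [K_mono' hθ h0 ht rfl
      (by ring : (θ+1)*((k:ℝ)+1)+1 = θ + (θ+1)*k + 2)
      (by ring : (θ+1)*((k:ℝ)+1) = θ + (θ+1)*k + 1),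
    K_mono' hθ (by linarith : (0:ℝ) ≤ (θ+1)*k+1) ht (by ring)
      (by ring : (θ+1)*((k:ℝ)+1)+2 = θ + ((θ+1)*k+1) + 2)
      (by ring : (θ+1)*((k:ℝ)+1)+1 = θ + ((θ+1)*k+1) + 1),
    K_mono' hθ (by linarith : (0:ℝ) ≤ (θ+1)*k+2) ht (by ring)
      (by ring : (θ+1)*((k:ℝ)+1)+3 = θ + ((θ+1)*k+2) + 2)
      (by ring : (θ+1)*((k:ℝ)+1)+2 = θ + ((θ+1)*k+2) + 1)]
  unfold mlA
  rw [← hc]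
  push_cast
  ring

set_option maxHeartbeats 1000000 in
theorem volterra_linear_initial_data
    (θ κ u₀ u₁ : ℝ) (hθ : -1 < θ) (hκ : 0 < κ)
    (η : ℝ → ℝ) (hcont : ContinuousOn η (Set.Ici 0))
    (heq : ∀ t ≥ (0:ℝ),
      η t = (u₀ + u₁ * t) ^ 2 + κ * ∫ s in (0:ℝ)..t, (t - s) ^ θ * η s) :
    ∀ t ≥ (0:ℝ),
      η t = u₀ ^ 2 * mittagLeffler (θ + 1) 1 (κ * Real.Gamma (θ + 1) * t ^ (θ + 1))
        + 2 * u₀ * u₁ * t * mittagLeffler (θ + 1) 2 (κ * Real.Gamma (θ + 1) * t ^ (θ + 1))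
        + 2 * u₁ ^ 2 * t ^ 2 * mittagLeffler (θ + 1) 3 (κ * Real.Gamma (θ + 1) * t ^ (θ + 1)) := by
  have ha : (0:ℝ) < θ + 1 := by linarith
  have hΓθ : 0 < Real.Gamma (θ + 1) := Real.Gamma_pos_of_pos ha
  set R := iterK θ κ η with hRdef
  have hR0 : R 0 = η := rfl
  have hRS : ∀ n, ∀ s : ℝ, R (n + 1) s = κ * ∫ r in (0:ℝ)..s, (s - r) ^ θ * R n r :=
    fun n s => rfl
  -- the joint induction
  have main : ∀ n : ℕ, ContinuousOn (R n) (Ici 0) ∧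
      ∀ s, 0 ≤ s → R n s = mlA θ κ u₀ u₁ n s + R (n + 1) s := by
    intro n
    induction n with
    | zero =>
      refine ⟨hcont, fun s hs => ?_⟩
      have h := heq s hs
      have hg3 : Real.Gamma 3 = 2 := by
        rw [show (3:ℝ) = ((2:ℕ):ℝ) + 1 by norm_num, Real.Gamma_nat_eq_factorial]
        norm_num
      have hA0 : mlA θ κ u₀ u₁ 0 s = (u₀ + u₁ * s) ^ 2 := by
        have e0 : (θ + 1) * ((0:ℕ):ℝ) = 0 := by norm_num
        unfold mlA
        rw [e0, zero_add, zero_add, zero_add, Real.rpow_zero, Real.rpow_one, Real.rpow_two,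
          Real.Gamma_one, Real.Gamma_two, hg3]
        ring
      rw [hR0, hA0, hRS 0]
      exact h
    | succ n ih =>
      obtain ⟨hcn, hen⟩ := ih
      have hcn1 : ContinuousOn (R (n + 1)) (Ici 0) := by
        refine ContinuousOn.congr (f := fun s => R n s - mlA θ κ u₀ u₁ n s)
          (hcn.sub (mlA_cont (κ := κ) (u₀ := u₀) (u₁ := u₁) hθ n _)) fun s hs => ?_
        simp only []
        rw [hen s hs]; ring
      refine ⟨hcn1, fun s hs => ?_⟩
      have iA : IntervalIntegrable (fun r => (s - r) ^ θ * mlA θ κ u₀ u₁ n r) volume 0 s :=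
        kerMul_int hθ hs (mlA_cont hθ n _)
      have iR : IntervalIntegrable (fun r => (s - r) ^ θ * R (n + 1) r) volume 0 s :=
        kerMul_int hθ hs (hcn1.mono Icc_subset_Ici_self)
      have hsplit : ∫ r in (0:ℝ)..s, (s - r) ^ θ * R n r
          = (∫ r in (0:ℝ)..s, (s - r) ^ θ * mlA θ κ u₀ u₁ n r)
            + ∫ r in (0:ℝ)..s, (s - r) ^ θ * R (n + 1) r := by
        rw [← intervalIntegral.integral_add iA iR]
        refine intervalIntegral.integral_congr fun r hr => ?_
        rw [uIcc_of_le hs] at hr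
        rw [hen r hr.1]; ring
      rw [hRS n s, hsplit, mul_add, mlA_step hθ n hs, ← hRS (n+1) s]
  -- telescoping
  have tele : ∀ t ≥ (0:ℝ), ∀ n : ℕ,
      η t = (∑ k ∈ Finset.range n, mlA θ κ u₀ u₁ k t) + R n t := by
    intro t ht n
    induction n with
    | zero => simp [hR0]
    | succ n ih =>
      rw [ih, (main n).2 t ht, Finset.sum_range_succ]; ring
  intro t ht
  -- bound on remainder
  obtain ⟨M0, hM0⟩ := (isCompact_Icc (a := (0:ℝ)) (b := t)).exists_bound_of_continuousOn
    (hcont.mono Icc_subset_Ici_self)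
  set M := max M0 0 with hMdef
  have hMnn : 0 ≤ M := le_max_right _ _
  have hM : ∀ s ∈ Icc (0:ℝ) t, |η s| ≤ M := fun s hs =>
    le_trans (by simpa [Real.norm_eq_abs] using hM0 s hs) (le_max_left _ _)
  have bound : ∀ n : ℕ, ∀ s ∈ Icc (0:ℝ) t, |R n s|
      ≤ M * (κ * Real.Gamma (θ + 1)) ^ n * (s ^ ((θ + 1) * n) / Real.Gamma ((θ + 1) * n + 1)) := by
    intro n
    induction n with
    | zero =>
      intro s hs
      simpa [Real.Gamma_one, hR0] using hM s hs
    | succ n ih =>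
      intro s hs
      have hs0 : 0 ≤ s := hs.1
      have hq0 : (0:ℝ) ≤ (θ + 1) * n := by positivity
      have h1 : |R (n+1) s| ≤ κ * ∫ r in (0:ℝ)..s, |(s - r) ^ θ * R n r| := by
        rw [hRS n s, abs_mul, abs_of_pos hκ]
        exact mul_le_mul_of_nonneg_left
          (intervalIntegral.abs_integral_le_integral_abs hs0) hκ.le
      have h2 : ∫ r in (0:ℝ)..s, |(s - r) ^ θ * R n r|
          ≤ ∫ r in (0:ℝ)..s, (M * (κ * Real.Gamma (θ + 1)) ^ n)
              * ((s - r) ^ θ * (r ^ ((θ + 1) * n) / Real.Gamma ((θ + 1) * n + 1))) := by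
        apply intervalIntegral.integral_mono_on hs0
        · exact (kerMul_int hθ hs0 ((main n).1.mono Icc_subset_Ici_self)).abs
        · exact (kerMul_int hθ hs0 ((contMono' hq0 _).div_const _)).const_mul _
        · intro r hr
          have hsr : (0:ℝ) ≤ s - r := by linarith [hr.2]
          rw [abs_mul, abs_of_nonneg (Real.rpow_nonneg hsr θ)]
          have := ih r ⟨hr.1, le_trans hr.2 hs.2⟩
          calc (s - r) ^ θ * |R n r|
              ≤ (s - r) ^ θ * (M * (κ * Real.Gamma (θ + 1)) ^ n
                  * (r ^ ((θ + 1) * n) / Real.Gamma ((θ + 1) * n + 1))) :=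
                mul_le_mul_of_nonneg_left this (Real.rpow_nonneg hsr θ)
            _ = (M * (κ * Real.Gamma (θ + 1)) ^ n)
                  * ((s - r) ^ θ * (r ^ ((θ + 1) * n) / Real.Gamma ((θ + 1) * n + 1))) := by
                ring
      have h3 : ∫ r in (0:ℝ)..s, (M * (κ * Real.Gamma (θ + 1)) ^ n)
              * ((s - r) ^ θ * (r ^ ((θ + 1) * n) / Real.Gamma ((θ + 1) * n + 1)))
          = (M * (κ * Real.Gamma (θ + 1)) ^ n) * (Real.Gamma (θ + 1)
              * (s ^ ((θ + 1) * (n + 1 : ℕ)) / Real.Gamma ((θ + 1) * (n + 1 : ℕ) + 1))) := by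
        rw [intervalIntegral.integral_const_mul,
          K_mono' hθ hq0 hs0 rfl
            (by push_cast; ring : (θ+1) * ((n + 1 : ℕ):ℝ) + 1 = θ + (θ + 1) * n + 2)
            (by push_cast; ring : (θ+1) * ((n + 1 : ℕ):ℝ) = θ + (θ + 1) * n + 1)]
      have h4 : κ * ((M * (κ * Real.Gamma (θ + 1)) ^ n) * (Real.Gamma (θ + 1)
              * (s ^ ((θ + 1) * (n + 1 : ℕ)) / Real.Gamma ((θ + 1) * (n + 1 : ℕ) + 1))))
          = M * (κ * Real.Gamma (θ + 1)) ^ (n + 1)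
              * (s ^ ((θ + 1) * (n + 1 : ℕ)) / Real.Gamma ((θ + 1) * (n + 1 : ℕ) + 1)) := by
        ring
      calc |R (n+1) s| ≤ κ * ∫ r in (0:ℝ)..s, |(s - r) ^ θ * R n r| := h1
        _ ≤ κ * ∫ r in (0:ℝ)..s, (M * (κ * Real.Gamma (θ + 1)) ^ n)
              * ((s - r) ^ θ * (r ^ ((θ + 1) * n) / Real.Gamma ((θ + 1) * n + 1))) :=
            mul_le_mul_of_nonneg_left h2 hκ.le
        _ = M * (κ * Real.Gamma (θ + 1)) ^ (n + 1)
              * (s ^ ((θ + 1) * (n + 1 : ℕ)) / Real.Gamma ((θ + 1) * (n + 1 : ℕ) + 1)) := by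
            rw [h3, h4]
  -- case t = 0
  rcases eq_or_lt_of_le ht with ht0 | ht0
  · have ht0 : t = 0 := ht0.symm
    subst ht0
    have hη0 : η 0 = u₀ ^ 2 := by
      have := heq 0 le_rfl
      simpa using this
    have hml : ∀ b : ℝ, 0 < b → mittagLeffler (θ + 1) b 0 = 1 / Real.Gamma b := by
      intro b hb
      unfold mittagLeffler
      rw [tsum_eq_single 0 (fun k hk => by
        rw [zero_pow hk, zero_div])]
      norm_num
    have hx : κ * Real.Gamma (θ + 1) * (0:ℝ) ^ (θ + 1) = 0 := by
      rw [Real.zero_rpow (by linarith)]; ring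
    rw [hx, hη0, hml 1 one_pos, hml 2 two_pos, hml 3 three_pos, Real.Gamma_one]
    norm_num
  -- case t > 0
  · set x := κ * Real.Gamma (θ + 1) * t ^ (θ + 1) with hxdef
    have hxk : ∀ k : ℕ, x ^ k = (κ * Real.Gamma (θ + 1)) ^ k * t ^ ((θ + 1) * k) := by
      intro k
      rw [hxdef, mul_pow, Real.rpow_mul ht, Real.rpow_natCast]
    have hAk : ∀ k : ℕ, mlA θ κ u₀ u₁ k t
        = u₀ ^ 2 * (x ^ k / Real.Gamma ((θ + 1) * k + 1))
          + (2 * u₀ * u₁ * t * (x ^ k / Real.Gamma ((θ + 1) * k + 2))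
          + 2 * u₁ ^ 2 * t ^ 2 * (x ^ k / Real.Gamma ((θ + 1) * k + 3))) := by
      intro k
      unfold mlA
      rw [hxk k, Real.rpow_add ht0, Real.rpow_add ht0, Real.rpow_one,
        show (2:ℝ) = ((2:ℕ):ℝ) by norm_num, Real.rpow_natCast]
      ring
    have s1 : HasSum (fun k : ℕ => x ^ k / Real.Gamma ((θ + 1) * k + 1))
        (mittagLeffler (θ + 1) 1 x) := by
      unfold mittagLeffler; exact (ml_summable ha one_pos x).hasSum
    have s2 : HasSum (fun k : ℕ => x ^ k / Real.Gamma ((θ + 1) * k + 2))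
        (mittagLeffler (θ + 1) 2 x) := by
      unfold mittagLeffler; exact (ml_summable ha two_pos x).hasSum
    have s3 : HasSum (fun k : ℕ => x ^ k / Real.Gamma ((θ + 1) * k + 3))
        (mittagLeffler (θ + 1) 3 x) := by
      unfold mittagLeffler; exact (ml_summable ha three_pos x).hasSum
    have hS : HasSum (fun k : ℕ => mlA θ κ u₀ u₁ k t)
        (u₀ ^ 2 * mittagLeffler (θ + 1) 1 x
          + (2 * u₀ * u₁ * t * mittagLeffler (θ + 1) 2 x
          + 2 * u₁ ^ 2 * t ^ 2 * mittagLeffler (θ + 1) 3 x)) := by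
      have := (s1.mul_left (u₀ ^ 2)).add
        ((s2.mul_left (2 * u₀ * u₁ * t)).add (s3.mul_left (2 * u₁ ^ 2 * t ^ 2)))
      rwa [show (fun k : ℕ => mlA θ κ u₀ u₁ k t) = _ from funext hAk]
    have lim1 : Tendsto (fun n => ∑ k ∈ Finset.range n, mlA θ κ u₀ u₁ k t) atTop
        (nhds (u₀ ^ 2 * mittagLeffler (θ + 1) 1 x
          + (2 * u₀ * u₁ * t * mittagLeffler (θ + 1) 2 x
          + 2 * u₁ ^ 2 * t ^ 2 * mittagLeffler (θ + 1) 3 x))) := hS.tendsto_sum_nat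
    have hRbound : ∀ n : ℕ, ‖R n t‖ ≤ M * (x ^ n / Real.Gamma ((θ + 1) * n + 1)) := by
      intro n
      rw [Real.norm_eq_abs]
      calc |R n t| ≤ M * (κ * Real.Gamma (θ + 1)) ^ n
            * (t ^ ((θ + 1) * n) / Real.Gamma ((θ + 1) * n + 1)) :=
          bound n t ⟨ht, le_rfl⟩
        _ = M * (x ^ n / Real.Gamma ((θ + 1) * n + 1)) := by rw [hxk n]; ring
    have hglim : Tendsto (fun n : ℕ => M * (x ^ n / Real.Gamma ((θ + 1) * n + 1))) atTop
        (nhds 0) := by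
      have := ((ml_summable ha one_pos x).tendsto_atTop_zero).const_mul M
      simpa using this
    have hRlim : Tendsto (fun n => R n t) atTop (nhds 0) :=
      squeeze_zero_norm hRbound hglim
    have lim2 : Tendsto (fun n => ∑ k ∈ Finset.range n, mlA θ κ u₀ u₁ k t) atTop
        (nhds (η t)) := by
      have hfe : (fun n => ∑ k ∈ Finset.range n, mlA θ κ u₀ u₁ k t)
          = fun n => η t - R n t := by
        funext n
        rw [tele t ht n]; ring
      rw [hfe]
      simpa using tendsto_const_nhds.sub hRlim
    have := tendsto_nhds_unique lim2 lim1
    rw [this, add_assoc]
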